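/- Let (R, d) be an infinite minimal divisive meadow, i.e., R is infinite and the only subring of R closed under d is R itself. Suppose that for every positive integer k there exist integers n, m such that 1 + d 1 ((k : R)) = d ((n : R)) ((m : R)) in R (i.e., every closed fraction 1 + 1/k is equal in R to a simple closed fraction). Then R is isomorphic to the divisive meadow of rational numbers: there exists a ring isomorphism e : R ≃ ℚ such that e (d x y) = e x / e y for all x, y ∈ R, where / is the zero-totalized division of ℚ (a/0 = 0, as in Mathlib). (An infinite minimal divisive meadow admits transformation into simple fractions for closed terms only if it is isomorphic to ℚ.) -/

import Mathlib

section Meadow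

variable {R : Type*} [CommRing R] (d : R → R → R)
variable (h1 : ∀ x : R, d 1 (d 1 x) = x) (h2 : ∀ x : R, d (x * x) x = x)
  (h3 : ∀ x y : R, d x y = x * d 1 y)

include h2 h3 in
/-- x² · x⁻¹ = x -/
theorem meadow_L1 (x : R) : x * x * d 1 x = x := by
  have := h2 x; rwa [h3] at this

include h1 h2 h3 in
/-- (x⁻¹)² · x = x⁻¹ -/
theorem meadow_L2 (x : R) : d 1 x * d 1 x * x = d 1 x := by
  have := meadow_L1 d h2 h3 (d 1 x); rwa [h1] at this

include h1 h2 h3 in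
theorem meadow_L3 : d 1 (0 : R) = 0 := by
  have := meadow_L2 d h1 h2 h3 (0 : R); simpa using this.symm

include h2 h3 in
theorem meadow_sq_zero {x : R} (hx : x * x = 0) : x = 0 := by
  have := meadow_L1 d h2 h3 x; rw [hx, zero_mul] at this; exact this.symm

include h2 h3 in
theorem meadow_pow_zero {x : R} : ∀ n : ℕ, x ^ (n + 1) = 0 → x = 0 := by
  intro n
  induction n using Nat.strong_induction_on with
  | _ n ih =>
    intro hx
    rcases Nat.eq_zero_or_pos n with h | h
    · subst h; simpa using hx
    · -- (x^n)^2 = x^(2n) = x^(n+1) * x^(n-1) = 0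
      have h2n : x ^ n * x ^ n = 0 := by
        have : x ^ n * x ^ n = x ^ (n + 1) * x ^ (n - 1) := by
          rw [← pow_add, ← pow_add]
          congr 1
          omega
        rw [this, hx, zero_mul]
      have hxn : x ^ n = 0 := meadow_sq_zero d h2 h3 h2n
      obtain ⟨m, rfl⟩ : ∃ m, n = m + 1 := ⟨n - 1, by omega⟩
      exact ih m (by omega) hxn

/-- uniqueness of pseudo-inverses in a commutative ring -/
theorem pseudo_unique {x a b : R} (ha1 : x * x * a = x) (ha2 : a * a * x = a)
    (hb1 : x * x * b = x) (hb2 : b * b * x = b) : a = b := by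
  linear_combination (-1 + x * b) * ha2 - a * a * hb1 + (1 - x * a) * hb2 + b * b * ha1

include h1 h2 h3 in
/-- if x has a genuine inverse v then d 1 x = v -/
theorem meadow_inv_eq {x v : R} (hv : x * v = 1) : d 1 x = v :=
  pseudo_unique (x := x) (meadow_L1 d h2 h3 x) (meadow_L2 d h1 h2 h3 x)
    (by linear_combination x * hv) (by linear_combination v * hv)

end Meadow


section Meadow2

variable {R : Type*} [CommRing R]

theorem int_transfer (t : R) (J : ℕ) (hJt : (J : R) * t = 0) {w w' : ℤ}
    (h : (w : ZMod J) = (w' : ZMod J)) : (w : R) * t = (w' : R) * t := by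
  have hm : w ≡ w' [ZMOD (J : ℕ)] := (ZMod.intCast_eq_intCast_iff w w' J).mp h
  obtain ⟨v, hv⟩ := Int.ModEq.dvd hm
  have hc : (w' : R) - (w : R) = (J : R) * (v : R) := by
    have := congrArg (fun z : ℤ => (z : R)) hv
    push_cast at this
    linear_combination this
  linear_combination (-t) * hc - (v : R) * hJt

variable (d : R → R → R)
variable (h2 : ∀ x : R, d (x * x) x = x) (h3 : ∀ x y : R, d x y = x * d 1 y)

include h2 h3 in
theorem int_pseudo (t : R) (ht : t * t = t) (J : ℕ) (hJ : 1 ≤ J)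
    (hJt : (J : R) * t = 0) (z : ℤ) :
    ∃ z' : ℤ, ((z : R) * t) * ((z : R) * t) * ((z' : R) * t) = (z : R) * t ∧
      ((z' : R) * t) * ((z' : R) * t) * ((z : R) * t) = (z' : R) * t := by
  haveI : NeZero J := ⟨by omega⟩
  set b : R := (z : R) * t with hb
  have hbpow : ∀ a : ℕ, b ^ (a + 1) = ((z ^ (a + 1) : ℤ) : R) * t := by
    intro a
    induction a with
    | zero => simp [hb]
    | succ a ih =>
      rw [pow_succ, ih, hb]
      push_cast
      linear_combination ((z : R) ^ (a + 1) * (z : R)) * ht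
  have main : ∀ s r : ℕ, s < r → ((z : ZMod J)) ^ s = ((z : ZMod J)) ^ r →
      ∃ z' : ℤ, b * b * ((z' : R) * t) = b ∧
        ((z' : R) * t) * ((z' : R) * t) * b = (z' : R) * t := by
    intro s r hsr heq
    have hbsr : b ^ (r + 1) = b ^ (s + 1) := by
      rw [hbpow r, hbpow s]
      apply int_transfer t J hJt
      push_cast
      rw [pow_succ, pow_succ, heq]
    obtain ⟨l, hl⟩ : ∃ l, r = s + (l + 1) := ⟨r - s - 1, by omega⟩
    have hper : ∀ a : ℕ, b ^ (a + (s + 1) + (l + 1)) = b ^ (a + (s + 1)) := by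
      intro a
      have e : a + (s + 1) + (l + 1) = a + (r + 1) := by omega
      rw [e, pow_add b a (r + 1), pow_add b a (s + 1), hbsr]
    have hqper : ∀ q a : ℕ, b ^ (a + (s + 1) + q * (l + 1)) = b ^ (a + (s + 1)) := by
      intro q
      induction q with
      | zero => intro a; simp
      | succ q ih =>
        intro a
        have e : a + (s + 1) + (q + 1) * (l + 1) = (a + q * (l + 1)) + (s + 1) + (l + 1) := by
          ring
        rw [e, hper (a + q * (l + 1))]
        have e2 : a + q * (l + 1) + (s + 1) = a + (s + 1) + q * (l + 1) := by ring
        rw [e2, ih a]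
    have hge : s + 2 ≤ (l + 1) * (s + 2) := Nat.le_mul_of_pos_left _ (by omega)
    obtain ⟨M, hM⟩ : ∃ M, (l + 1) * (s + 2) = M + 2 := ⟨(l + 1) * (s + 2) - 2, by omega⟩
    obtain ⟨a0, ha0⟩ : ∃ a0, a0 + (s + 1) = M + 2 := ⟨M + 2 - (s + 1), by omega⟩
    have hNN : b ^ (2 * (M + 2)) = b ^ (M + 2) := by
      have hq := hqper (s + 2) a0
      rw [ha0] at hq
      have hcomm : (s + 2) * (l + 1) = M + 2 := by rw [Nat.mul_comm]; exact hM
      have e3 : M + 2 + (s + 2) * (l + 1) = 2 * (M + 2) := by omega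
      rw [e3] at hq
      exact hq
    have hidem : b ^ (M + 2) * b ^ (M + 2) = b ^ (M + 2) := by
      rw [← pow_add]
      have e : M + 2 + (M + 2) = 2 * (M + 2) := by ring
      rw [e]
      exact hNN
    have hgpow : ∀ q : ℕ, (b - b * b ^ (M + 2)) ^ (q + 1) = b ^ (q + 1) * (1 - b ^ (M + 2)) := by
      intro q
      induction q with
      | zero => rw [pow_one, pow_one]; ring
      | succ q ih =>
        rw [pow_succ, ih, pow_succ]
        linear_combination (b ^ (q + 1) * b) * hidem
    have hgz : b - b * b ^ (M + 2) = 0 := by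
      apply meadow_pow_zero d h2 h3 (M + 2)
      rw [hgpow (M + 2)]
      have h1' : b ^ (M + 3) * b ^ (M + 2) = b ^ (M + 3) := by
        rw [← pow_add]
        have e : M + 3 + (M + 2) = 2 * (M + 2) + 1 := by ring
        rw [e, pow_succ, hNN, ← pow_succ]
      linear_combination -h1'
    have hb1 : b ^ (M + 3) = b := by linear_combination -hgz
    refine ⟨z ^ (M + 1), ?_, ?_⟩
    · rw [show ((z ^ (M + 1) : ℤ) : R) * t = b ^ (M + 1) from (hbpow M).symm]
      linear_combination hb1
    · rw [show ((z ^ (M + 1) : ℤ) : R) * t = b ^ (M + 1) from (hbpow M).symm]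
      have e : b ^ (M + 1) * b ^ (M + 1) * b = b ^ M * b ^ (M + 3) := by ring
      rw [e, hb1, ← pow_succ]
  obtain ⟨s, r, hne, heq⟩ := Finite.exists_ne_map_eq_of_infinite (fun n : ℕ => ((z : ZMod J)) ^ n)
  rcases hne.lt_or_gt with h | h
  · exact main s r h heq
  · exact main r s h heq.symm

end Meadow2

section Meadow3

variable {R : Type*} [CommRing R]
variable (d : R → R → R)
variable (h1 : ∀ x : R, d 1 (d 1 x) = x) (h2 : ∀ x : R, d (x * x) x = x)
  (h3 : ∀ x y : R, d x y = x * d 1 y)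

include h1 h2 h3 in
theorem meadow_corner (hmin : ∀ S : Subring R, (∀ x y : R, x ∈ S → y ∈ S → d x y ∈ S) → S = ⊤)
    (t : R) (ht : t * t = t) (J : ℕ) (hJ : 1 ≤ J) (hJt : (J : R) * t = 0) :
    ∀ x : R, ∃ z : ℤ, x * t = (z : R) * t := by
  let S : Subring R :=
    { carrier := {x : R | ∃ z : ℤ, x * t = (z : R) * t}
      zero_mem' := ⟨0, by push_cast; ring⟩
      one_mem' := ⟨1, by push_cast; ring⟩
      add_mem' := by
        rintro a b ⟨z1, hz1⟩ ⟨z2, hz2⟩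
        exact ⟨z1 + z2, by push_cast; linear_combination hz1 + hz2⟩
      neg_mem' := by
        rintro a ⟨z1, hz1⟩
        exact ⟨-z1, by push_cast; linear_combination -hz1⟩
      mul_mem' := by
        rintro a b ⟨z1, hz1⟩ ⟨z2, hz2⟩
        refine ⟨z1 * z2, ?_⟩
        push_cast
        linear_combination (b * t) * hz1 + ((z1 : R) * t) * hz2 - (a * b - (z1 : R) * (z2 : R)) * ht }
  have hd : ∀ x y : R, x ∈ S → y ∈ S → d x y ∈ S := by
    intro x y hx hy
    obtain ⟨z2, hz2⟩ := hy
    have hiy : d 1 y ∈ S := by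
      obtain ⟨z', e1, e2⟩ := int_pseudo d h2 h3 t ht J hJ hJt z2
      have p1 : ((z2 : R) * t) * ((z2 : R) * t) * (d 1 y * t) = (z2 : R) * t := by
        rw [← hz2]
        linear_combination (t * t * t) * (meadow_L1 d h2 h3 y) + y * (t + 1) * ht
      have p2 : (d 1 y * t) * (d 1 y * t) * ((z2 : R) * t) = d 1 y * t := by
        rw [← hz2]
        linear_combination (t * t * t) * (meadow_L2 d h1 h2 h3 y) + d 1 y * (t + 1) * ht
      exact ⟨z', pseudo_unique p1 p2 e1 e2⟩
    rw [h3]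
    exact S.mul_mem hx hiy
  intro x
  have hx : x ∈ S := by rw [hmin S hd]; exact Subring.mem_top x
  exact hx

include h1 h2 h3 in
theorem meadow_not_torsion
    (hmin : ∀ S : Subring R, (∀ x y : R, x ∈ S → y ∈ S → d x y ∈ S) → S = ⊤)
    (hinf : Infinite R) (J : ℕ) (hJ : 1 ≤ J) (hJz : (J : R) = 0) : False := by
  haveI : NeZero J := ⟨by omega⟩
  have hcorner := meadow_corner d h1 h2 h3 hmin 1 (by ring) J hJ (by rw [hJz, zero_mul])
  have hsurj : Function.Surjective (fun a : ZMod J => (((a.val : ℤ) : R))) := by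
    intro x
    obtain ⟨z, hz⟩ := hcorner x
    rw [mul_one, mul_one] at hz
    refine ⟨(z : ZMod J), ?_⟩
    have hvz : ((((z : ZMod J)).val : ℤ) : ZMod J) = ((z : ℤ) : ZMod J) := by
      push_cast
      simp [ZMod.natCast_val, ZMod.intCast_zmod_cast]
    have := int_transfer (1 : R) J (by rw [hJz, zero_mul]) hvz
    rw [mul_one, mul_one] at this
    simp only [this]
    exact hz.symm
  haveI : Finite R := Finite.of_surjective _ hsurj
  exact not_finite R

end Meadow3

section Meadow4

variable {R : Type*} [CommRing R]
variable (d : R → R → R)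
variable (h1 : ∀ x : R, d 1 (d 1 x) = x) (h2 : ∀ x : R, d (x * x) x = x)
  (h3 : ∀ x y : R, d x y = x * d 1 y)

include h1 h2 h3 in
theorem meadow_int_unit
    (hmin : ∀ S : Subring R, (∀ x y : R, x ∈ S → y ∈ S → d x y ∈ S) → S = ⊤)
    (hinf : Infinite R)
    (hclosed : ∀ k : ℕ, 0 < k → ∃ n m : ℤ,
      1 + d 1 ((k : R)) = d ((n : R)) ((m : R)))
    (k : ℕ) (hk : 0 < k) : (k : R) * d 1 ((k : R)) = 1 := by
  by_contra hne
  obtain ⟨n, m, hnm⟩ := hclosed k hk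
  rw [show d ((n : R)) ((m : R)) = (n : R) * d 1 ((m : R)) from h3 _ _] at hnm
  have hL1k := meadow_L1 d h2 h3 ((k : R))
  have hL2k := meadow_L2 d h1 h2 h3 ((k : R))
  have hL1m := meadow_L1 d h2 h3 ((m : R))
  have hL2m := meadow_L2 d h1 h2 h3 ((m : R))
  -- abbreviations (purely for readability in comments):
  -- e = (k:R) * d 1 k, em = (m:R) * d 1 m, u = 1 - e, c = e * em
  have h0 : (1 + d 1 ((k : R))) * (1 - (m : R) * d 1 ((m : R))) = 0 := by
    linear_combination (1 - (m : R) * d 1 ((m : R))) * hnm - (n : R) * hL2m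
  have hku : (k : R) * (1 - (k : R) * d 1 ((k : R))) = 0 := by
    linear_combination -hL1k
  have hiku : d 1 ((k : R)) * (1 - (k : R) * d 1 ((k : R))) = 0 := by
    linear_combination -hL2k
  have hB : ((k : R) * (k : R) + (k : R)) * (1 - (m : R) * d 1 ((m : R))) = 0 := by
    linear_combination ((k : R) * (k : R)) * h0 - (1 - (m : R) * d 1 ((m : R))) * hL1k
  have he : ((k : R) * d 1 ((k : R))) * ((k : R) * d 1 ((k : R))) = (k : R) * d 1 ((k : R)) := by
    linear_combination d 1 ((k : R)) * hL1k
  have hem : ((m : R) * d 1 ((m : R))) * ((m : R) * d 1 ((m : R))) = (m : R) * d 1 ((m : R)) := by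
    linear_combination d 1 ((m : R)) * hL1m
  -- c := e * em
  have hcc : (((k : R) * d 1 ((k : R))) * ((m : R) * d 1 ((m : R)))) *
      (((k : R) * d 1 ((k : R))) * ((m : R) * d 1 ((m : R)))) =
      ((k : R) * d 1 ((k : R))) * ((m : R) * d 1 ((m : R))) := by
    linear_combination (((m : R) * d 1 ((m : R))) * ((m : R) * d 1 ((m : R)))) * he +
      ((k : R) * d 1 ((k : R))) * hem
  have hec : ((k : R) * d 1 ((k : R))) * (((k : R) * d 1 ((k : R))) * ((m : R) * d 1 ((m : R)))) =
      ((k : R) * d 1 ((k : R))) * ((m : R) * d 1 ((m : R))) := by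
    linear_combination ((m : R) * d 1 ((m : R))) * he
  have hemc : ((m : R) * d 1 ((m : R))) * (((k : R) * d 1 ((k : R))) * ((m : R) * d 1 ((m : R)))) =
      ((k : R) * d 1 ((k : R))) * ((m : R) * d 1 ((m : R))) := by
    linear_combination ((k : R) * d 1 ((k : R))) * hem
  have hJc : ((k : R) * (k : R) + (k : R)) *
      (1 - ((k : R) * d 1 ((k : R))) * ((m : R) * d 1 ((m : R)))) = 0 := by
    linear_combination ((k : R) + 1) * hku + ((k : R) * d 1 ((k : R))) * hB
  have h1k : 1 ≤ k * k + k := by nlinarith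
  -- injectivity of z ↦ z * c
  have hinjc : ∀ z : ℤ, (z : R) *
      (((k : R) * d 1 ((k : R))) * ((m : R) * d 1 ((m : R)))) = 0 → z = 0 := by
    intro z hz
    by_contra hz0
    have hzz : ((z * (k * k + k : ℕ) : ℤ) : R) = 0 := by
      push_cast
      linear_combination ((k : R) * (k : R) + (k : R)) * hz + (z : R) * hJc
    have hwne : (z * (k * k + k : ℕ) : ℤ) ≠ 0 := by
      apply mul_ne_zero hz0
      have hne0 : k * k + k ≠ 0 := by nlinarith
      exact_mod_cast hne0
    set w : ℤ := z * (k * k + k : ℕ) with hw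
    have hw1 : 1 ≤ w.natAbs := Int.natAbs_pos.mpr hwne
    have hwz : ((w.natAbs : ℕ) : R) = 0 := by
      have hcast : (((w.natAbs : ℕ) : ℤ) : R) = ((w.natAbs : ℕ) : R) := Int.cast_natCast _
      rcases Int.natAbs_eq w with hcase | hcase
      · rw [← hcast, ← hcase]; exact hzz
      · have h5 : ((w.natAbs : ℕ) : ℤ) = -w := by linarith
        rw [← hcast, h5]
        push_cast
        linear_combination -hzz
    exact meadow_not_torsion d h1 h2 h3 hmin hinf w.natAbs hw1 hwz
  -- main computation:  (m(k+1) - nk) * c = 0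
  have hint : ((m * ((k : ℤ) + 1) - n * (k : ℤ) : ℤ) : R) *
      (((k : R) * d 1 ((k : R))) * ((m : R) * d 1 ((m : R)))) = 0 := by
    push_cast
    linear_combination ((k : R) * (m : R) * (((k : R) * d 1 ((k : R))) * ((m : R) * d 1 ((m : R))))) * hnm
      - (m : R) * hec + (n : R) * (k : R) * hemc
  have hintZ : m * ((k : ℤ) + 1) - n * (k : ℤ) = 0 := hinjc _ hint
  have hmZ : m = (k : ℤ) * (n - m) := by linear_combination hintZ
  have hmcast : (m : R) = (k : R) * ((n : R) - (m : R)) := by exact_mod_cast congrArg (fun z : ℤ => (z : R)) hmZ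
  have him_u : d 1 ((m : R)) * (1 - (k : R) * d 1 ((k : R))) = 0 := by
    linear_combination (d 1 ((m : R)) * d 1 ((m : R)) * (1 - (k : R) * d 1 ((k : R)))) * hmcast
      + (d 1 ((m : R)) * d 1 ((m : R)) * ((n : R) - (m : R))) * hku
      - (1 - (k : R) * d 1 ((k : R))) * hL2m
  have hu0 : 1 - (k : R) * d 1 ((k : R)) = 0 := by
    linear_combination (1 - (k : R) * d 1 ((k : R))) * hnm + (n : R) * him_u - hiku
  exact hne (by linear_combination -hu0)

end Meadow4

theorem infinite_minimal_closed_simple_fractions_iso_rat {R : Type*} [CommRing R]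
    (d : R → R → R)
    (h1 : ∀ x : R, d 1 (d 1 x) = x) (h2 : ∀ x : R, d (x * x) x = x)
    (h3 : ∀ x y : R, d x y = x * d 1 y)
    (hinf : Infinite R)
    (hmin : ∀ S : Subring R, (∀ x y : R, x ∈ S → y ∈ S → d x y ∈ S) → S = ⊤)
    (hclosed : ∀ k : ℕ, 0 < k → ∃ n m : ℤ,
      1 + d 1 ((k : R)) = d ((n : R)) ((m : R))) :
    ∃ e : R ≃+* ℚ, ∀ x y : R, e (d x y) = e x / e y := by
  haveI := hinf
  haveI : Nontrivial R := inferInstance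
  have hunit : ∀ y : nonZeroDivisors ℤ, IsUnit ((Int.castRingHom R) (y : ℤ)) := by
    intro y
    have hy : (y : ℤ) ≠ 0 := nonZeroDivisors.coe_ne_zero y
    have hk := meadow_int_unit d h1 h2 h3 hmin hinf hclosed (y : ℤ).natAbs
      (Int.natAbs_pos.mpr hy)
    have hu : IsUnit ((((y : ℤ).natAbs : ℕ)) : R) := IsUnit.of_mul_eq_one _ hk
    have hcast : (Int.castRingHom R) (y : ℤ) = (((y : ℤ)) : R) := rfl
    set W := (y : ℤ).natAbs with hW
    rcases Int.natAbs_eq (y : ℤ) with hcase | hcase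
    · rw [hcast, hcase, Int.cast_natCast]; exact hu
    · rw [hcast, hcase, Int.cast_neg, Int.cast_natCast]
      exact hu.neg
  let f : ℚ →+* R := IsLocalization.lift (M := nonZeroDivisors ℤ) (S := ℚ) hunit
  have hinv : ∀ q : ℚ, d 1 (f q) = f (q⁻¹) := by
    intro q
    rcases eq_or_ne q 0 with rfl | hq
    · rw [map_zero, inv_zero, map_zero]
      exact meadow_L3 d h1 h2 h3
    · apply meadow_inv_eq d h1 h2 h3
      rw [← map_mul, mul_inv_cancel₀ hq, map_one]
  have hdf : ∀ a b : ℚ, d (f a) (f b) = f (a / b) := by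
    intro a b
    rw [h3, hinv b, ← map_mul, div_eq_mul_inv]
  have hrange : ∀ x y : R, x ∈ f.range → y ∈ f.range → d x y ∈ f.range := by
    rintro x y ⟨a, rfl⟩ ⟨b, rfl⟩
    exact ⟨a / b, (hdf a b).symm⟩
  have hsurj : Function.Surjective f := by
    rw [← RingHom.range_eq_top]
    exact hmin f.range hrange
  have hinj : Function.Injective f := by
    intro a b hab
    by_contra hne
    have hx : f (a - b) = 0 := by rw [map_sub, hab, sub_self]
    have h10 : (1 : R) = 0 := by
      calc (1 : R) = f ((a - b) * (a - b)⁻¹) := by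
            rw [mul_inv_cancel₀ (sub_ne_zero.mpr hne), map_one]
      _ = f (a - b) * f (a - b)⁻¹ := map_mul f _ _
      _ = 0 := by rw [hx, zero_mul]
    exact one_ne_zero h10
  let iso := RingEquiv.ofBijective f ⟨hinj, hsurj⟩
  refine ⟨iso.symm, ?_⟩
  intro x y
  obtain ⟨a, rfl⟩ := hsurj x
  obtain ⟨b, rfl⟩ := hsurj y
  have hq : ∀ q : ℚ, iso.symm (f q) = q := fun q => iso.symm_apply_apply q
  rw [hdf a b, hq, hq, hq]
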